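/- Let T ∈ (0,∞] and let A, B, C : [0,T) → ℝ be differentiable with A(t), B(t), C(t) > 0, satisfying A' = 4(C² − A²)/(BC), B' = 4(A + C)²/(AC), and C' = 4(A² − C²)/(AB). Then A(t)·C(t) = A(0)·C(0) and B(t)·(C(t) − A(t)) = B(0)·(C(0) − A(0)) for all t ∈ [0,T). -/

import Mathlib

open Filter Set

lemma const_of_deriv_zero_aux (f : ℝ → ℝ) (t : ℝ) (ht : 0 ≤ t)
    (hf : ∀ x ∈ Icc (0:ℝ) t, HasDerivAt f 0 x) : f t = f 0 := by
  have hcont : ContinuousOn f (Icc 0 t) := fun x hx =>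
    (hf x hx).continuousAt.continuousWithinAt
  have hder : ∀ x ∈ Ico (0:ℝ) t, HasDerivWithinAt f 0 (Ici x) x := fun x hx =>
    (hf x ⟨hx.1, hx.2.le⟩).hasDerivWithinAt
  exact constant_of_has_deriv_right_zero hcont hder t ⟨ht, le_rfl⟩

/-- Ricci flow ODE on the Lie group `Isom(ℝ¹₁)`: the quantities `A·C` and
`B·(C - A)` are conserved along the flow. -/
theorem isomMinkowski_conserved (T : EReal) (hT : 0 < T) (A B C : ℝ → ℝ)
    (hA : ∀ t : ℝ, 0 ≤ t → (t : EReal) < T → 0 < A t)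
    (hB : ∀ t : ℝ, 0 ≤ t → (t : EReal) < T → 0 < B t)
    (hC : ∀ t : ℝ, 0 ≤ t → (t : EReal) < T → 0 < C t)
    (hA' : ∀ t : ℝ, 0 ≤ t → (t : EReal) < T →
      HasDerivAt A (4 * ((C t) ^ 2 - (A t) ^ 2) / (B t * C t)) t)
    (hB' : ∀ t : ℝ, 0 ≤ t → (t : EReal) < T →
      HasDerivAt B (4 * (A t + C t) ^ 2 / (A t * C t)) t)
    (hC' : ∀ t : ℝ, 0 ≤ t → (t : EReal) < T →
      HasDerivAt C (4 * ((A t) ^ 2 - (C t) ^ 2) / (A t * B t)) t) :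
    ∀ t : ℝ, 0 ≤ t → (t : EReal) < T →
      A t * C t = A 0 * C 0 ∧ B t * (C t - A t) = B 0 * (C 0 - A 0) := by
  intro t ht htT
  have hmem : ∀ x ∈ Icc (0:ℝ) t, 0 ≤ x ∧ (x : EReal) < T := by
    intro x hx
    exact ⟨hx.1, lt_of_le_of_lt (EReal.coe_le_coe_iff.mpr hx.2) htT⟩
  constructor
  · apply const_of_deriv_zero_aux (fun s => A s * C s) t ht
    intro x hx
    obtain ⟨hx0, hxT⟩ := hmem x hx
    have ha := hA x hx0 hxT
    have hb := hB x hx0 hxT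
    have hc := hC x hx0 hxT
    have h := (hA' x hx0 hxT).mul (hC' x hx0 hxT)
    have heq : 4 * ((C x) ^ 2 - (A x) ^ 2) / (B x * C x) * C x +
        A x * (4 * ((A x) ^ 2 - (C x) ^ 2) / (A x * B x)) = 0 := by
      field_simp
      ring
    rwa [heq] at h
  · apply const_of_deriv_zero_aux (fun s => B s * (C s - A s)) t ht
    intro x hx
    obtain ⟨hx0, hxT⟩ := hmem x hx
    have ha := hA x hx0 hxT
    have hb := hB x hx0 hxT
    have hc := hC x hx0 hxT
    have h := (hB' x hx0 hxT).mul ((hC' x hx0 hxT).sub (hA' x hx0 hxT))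
    have heq : 4 * (A x + C x) ^ 2 / (A x * C x) * (C x - A x) +
        B x * (4 * ((A x) ^ 2 - (C x) ^ 2) / (A x * B x) -
          4 * ((C x) ^ 2 - (A x) ^ 2) / (B x * C x)) = 0 := by
      field_simp
      ring
    rwa [Pi.sub_apply, heq] at h
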